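/- arXiv:2311.17454 — 2 statements merged into one kernel-verified Lean document; each statement's English description precedes it below -/
import Mathlib

section
/- Let h ∈ (0,1], α ∈ (0,1], τ > 0 and p ∈ [0,1) be real numbers, and let X be a real random variable whose distribution is the Gaussian measure on ℝ with mean μ_h = h·α·τ and variance σ_h² = h·α·τ·(1−p). If the real number θ satisfies θ < h·α − 6.36·√(h·α/τ), then Pr(X < θ·τ) < 2·10⁻¹⁰. (Theorem 1 of the paper: a cross-chain message gathers at least θτ honest votes with high probability, stated under the paper's Normal approximation of the Binomial vote count of honest envoys.) -/
open MeasureTheory ProbabilityTheory Set Real Filter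

lemma my_integral_exp_mul {b : ℝ} (hb : b ≠ 0) (y c : ℝ) :
    ∫ x in y..c, Real.exp (b * x) = (Real.exp (b * c) - Real.exp (b * y)) / b := by
  have D : ∀ x ∈ Set.uIcc y c, HasDerivAt (fun t => Real.exp (b * t) / b) (Real.exp (b * x)) x := by
    intro x _
    have := ((Real.hasDerivAt_exp (b * x)).comp x ((hasDerivAt_id x).const_mul b)).div_const b
    simpa [mul_comm, mul_div_cancel_left₀ _ hb] using this
  rw [intervalIntegral.integral_eq_sub_of_hasDerivAt D
    ((Real.continuous_exp.comp (continuous_const.mul continuous_id)).intervalIntegrable y c)]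
  ring

lemma my_integrableOn_exp_mul_Iic {b : ℝ} (hb : 0 < b) (c : ℝ) :
    IntegrableOn (fun x => Real.exp (b * x)) (Set.Iic c) := by
  refine integrableOn_Iic_of_intervalIntegral_norm_bounded (Real.exp (b * c) / b) c
    (fun y => ((Real.continuous_exp.comp
      (continuous_const.mul continuous_id)).intervalIntegrable y c).1)
    tendsto_id (Eventually.of_forall fun y => ?_)
  simp_rw [Real.norm_of_nonneg (Real.exp_pos _).le, my_integral_exp_mul hb.ne' y c]
  have := (Real.exp_pos (b * y)).le
  rw [div_le_div_iff_of_pos_right hb]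
  linarith

lemma my_integral_exp_mul_Iic {b : ℝ} (hb : 0 < b) (c : ℝ) :
    ∫ x in Set.Iic c, Real.exp (b * x) = Real.exp (b * c) / b := by
  refine tendsto_nhds_unique
    (intervalIntegral_tendsto_integral_Iic _ (my_integrableOn_exp_mul_Iic hb c) tendsto_id) ?_
  simp_rw [my_integral_exp_mul hb.ne' _ c]
  have h1 : Filter.Tendsto (fun y : ℝ => Real.exp (b * y)) atBot (nhds 0) :=
    Real.tendsto_exp_atBot.comp (Tendsto.const_mul_atBot hb tendsto_id)
  simpa using ((h1.const_sub (Real.exp (b * c))).div_const b)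

set_option maxHeartbeats 1000000 in
/-- Theorem 1 of the paper (under the Normal approximation): if
`θ < h·α − 6.36·√(h·α/τ)`, then a Gaussian vote count `X ∼ N(hατ, hατ(1−p))`
satisfies `Pr(X < θτ) < 2·10⁻¹⁰`. -/
theorem eden_theorem_honest
    {Ω : Type*} [MeasurableSpace Ω] (P : Measure Ω) [IsProbabilityMeasure P]
    (h α τ p θ : ℝ)
    (hh : h ∈ Set.Ioc (0 : ℝ) 1) (hα : α ∈ Set.Ioc (0 : ℝ) 1)
    (hτ : 0 < τ) (hp : p ∈ Set.Ico (0 : ℝ) 1)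
    (X : Ω → ℝ)
    (hX : P.map X = gaussianReal (h * α * τ) (h * α * τ * (1 - p)).toNNReal)
    (hθ : θ < h * α - 6.36 * Real.sqrt (h * α / τ)) :
    P {ω | X ω < θ * τ} < ENNReal.ofReal (2 / 10 ^ 10) := by
  obtain ⟨hh0, hh1⟩ := hh
  obtain ⟨hα0, hα1⟩ := hα
  obtain ⟨hp0, hp1⟩ := hp
  set m : ℝ := h * α * τ with hm_def
  have hm0 : 0 < m := by positivity
  have hvr : 0 < m * (1 - p) := by nlinarith
  set v : NNReal := (h * α * τ * (1 - p)).toNNReal with hv_def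
  have hv0 : v ≠ 0 := (Real.toNNReal_pos.mpr hvr).ne'
  have hvc : (v : ℝ) = m * (1 - p) := Real.coe_toNNReal _ hvr.le
  have hvpos : (0 : ℝ) < v := by rw [hvc]; exact hvr
  have hvm : (v : ℝ) ≤ m := by rw [hvc]; nlinarith
  set c : ℝ := θ * τ with hc_def
  -- c < m - 6.36 √m
  have hsq : Real.sqrt (h * α / τ) * τ = Real.sqrt m := by
    rw [show m = (h * α / τ) * τ ^ 2 by rw [hm_def]; field_simp,
      Real.sqrt_mul (by positivity), Real.sqrt_sq hτ.le]
  have hsm : 0 < Real.sqrt m := Real.sqrt_pos.mpr hm0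
  have hac : c < m - 6.36 * Real.sqrt m := by
    have := mul_lt_mul_of_pos_right hθ hτ
    rw [hc_def]
    calc θ * τ < (h * α - 6.36 * Real.sqrt (h * α / τ)) * τ := this
    _ = m - 6.36 * (Real.sqrt (h * α / τ) * τ) := by ring
    _ = m - 6.36 * Real.sqrt m := by rw [hsq]
  set a : ℝ := m - c with ha_def
  have ha : 6.36 * Real.sqrt m < a := by rw [ha_def]; linarith
  have ha0 : 0 < a := by nlinarith
  set s : ℝ := Real.sqrt v with hs_def
  have hs0 : 0 < s := Real.sqrt_pos.mpr hvpos
  have hsv : s * s = (v : ℝ) := Real.mul_self_sqrt hvpos.le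
  have hsm' : s ≤ Real.sqrt m := Real.sqrt_le_sqrt hvm
  have has : 6.36 * s < a := by nlinarith
  set b : ℝ := a / v with hb_def
  have hb : 0 < b := div_pos ha0 hvpos
  set C : ℝ := (Real.sqrt (2 * π * v))⁻¹ * Real.exp (-a ^ 2 / (2 * v)) with hC_def
  have hC0 : 0 < C := by
    apply mul_pos _ (Real.exp_pos _)
    rw [inv_pos]
    apply Real.sqrt_pos.mpr
    positivity
  -- measurability of X
  have hXm : AEMeasurable X P := by
    by_contra hcon
    rw [Measure.map_of_not_aemeasurable hcon] at hX
    have h1 : (gaussianReal m v) Set.univ = 1 := measure_univ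
    rw [← hX] at h1
    simp at h1
  have hset : P {ω | X ω < c} = (P.map X) (Set.Iio c) := by
    rw [Measure.map_apply_of_aemeasurable hXm measurableSet_Iio]
    rfl
  have hgauss : P {ω | X ω < c} = ∫⁻ x in Set.Iio c, gaussianPDF m v x := by
    rw [hset, hX, gaussianReal_apply _ hv0]
  rw [show {ω | X ω < θ * τ} = {ω | X ω < c} from rfl, hgauss]
  -- pointwise bound
  have hpt : ∀ x : ℝ, gaussianPDF m v x ≤ ENNReal.ofReal (C * Real.exp (b * (x - c))) := by
    intro x
    rw [gaussianPDF]
    apply ENNReal.ofReal_le_ofReal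
    rw [gaussianPDFReal]
    have hma : m = c + a := by rw [ha_def]; ring
    have h2v : (0 : ℝ) < 2 * (v : ℝ) := by positivity
    have key2 : -(x - m) ^ 2 ≤ -a ^ 2 + 2 * a * (x - c) := by
      have keyq : -(x - (c + a)) ^ 2 ≤ -a ^ 2 + 2 * a * (x - c) := by
        nlinarith [sq_nonneg (x - c)]
      rwa [← hma] at keyq
    have key : -(x - m) ^ 2 / (2 * (v : ℝ)) ≤ -a ^ 2 / (2 * (v : ℝ)) + b * (x - c) := by
      rw [hb_def]
      calc -(x - m) ^ 2 / (2 * (v : ℝ)) ≤ (-a ^ 2 + 2 * a * (x - c)) / (2 * (v : ℝ)) :=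
            (div_le_div_iff_of_pos_right h2v).mpr key2
      _ = -a ^ 2 / (2 * (v : ℝ)) + a / (v : ℝ) * (x - c) := by field_simp
    have expand : C * Real.exp (b * (x - c))
        = (Real.sqrt (2 * π * (v : ℝ)))⁻¹ * Real.exp (-a ^ 2 / (2 * (v : ℝ)) + b * (x - c)) := by
      rw [hC_def, mul_assoc, ← Real.exp_add]
    rw [expand]
    exact mul_le_mul_of_nonneg_left (Real.exp_le_exp.mpr key) (by positivity)
  -- integral of the bounding function
  have hfun : (fun x : ℝ => C * Real.exp (b * (x - c)))
      = fun x => (C * Real.exp (-(b * c))) * Real.exp (b * x) := by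
    funext x
    rw [show b * (x - c) = -(b * c) + b * x by ring, Real.exp_add, ← mul_assoc]
  have hint : IntegrableOn (fun x : ℝ => C * Real.exp (b * (x - c))) (Set.Iio c) := by
    rw [hfun]
    exact ((my_integrableOn_exp_mul_Iic hb c).mono_set Set.Iio_subset_Iic_self).const_mul _
  have heq : ∫⁻ x in Set.Iio c, ENNReal.ofReal (C * Real.exp (b * (x - c)))
      = ENNReal.ofReal (C / b) := by
    rw [← ofReal_integral_eq_lintegral_ofReal hint (ae_of_all _ fun x => by positivity)]
    congr 1
    calc ∫ x in Set.Iio c, C * Real.exp (b * (x - c))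
        = ∫ x in Set.Iic c, C * Real.exp (b * (x - c)) := integral_Iic_eq_integral_Iio.symm
    _ = C * Real.exp (-(b * c)) * (Real.exp (b * c) / b) := by
        simp_rw [hfun]
        rw [integral_const_mul, my_integral_exp_mul_Iic hb c]
    _ = C / b := by
        rw [mul_assoc, show Real.exp (-(b * c)) * (Real.exp (b * c) / b) = 1 / b by
          rw [← mul_div_assoc, ← Real.exp_add]; simp, mul_one_div]
  -- numeric bound on C / b
  have hCb : C / b = (Real.sqrt (2 * π * (v : ℝ)))⁻¹ * Real.exp (-a ^ 2 / (2 * (v : ℝ)))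
      * ((v : ℝ) / a) := by
    rw [hC_def, hb_def, div_div_eq_mul_div, mul_div_assoc]
  have h25 : (2.5 : ℝ) ≤ Real.sqrt (2 * π) := by
    rw [show (2.5 : ℝ) = Real.sqrt (2.5 ^ 2) from (Real.sqrt_sq (by norm_num)).symm]
    exact Real.sqrt_le_sqrt (by linarith [Real.pi_gt_d6])
  have hsqrt2pi : (2.5 : ℝ) * s ≤ Real.sqrt (2 * π * (v : ℝ)) := by
    rw [Real.sqrt_mul (by positivity)]
    exact mul_le_mul_of_nonneg_right h25 (Real.sqrt_nonneg _)
  have h1 : (Real.sqrt (2 * π * (v : ℝ)))⁻¹ ≤ (2.5 * s)⁻¹ := by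
    apply inv_anti₀ (by positivity) hsqrt2pi
  have h2 : Real.exp (-a ^ 2 / (2 * (v : ℝ))) ≤ Real.exp (-20) := by
    apply Real.exp_le_exp.mpr
    rw [neg_div, neg_le_neg_iff, le_div_iff₀ (by positivity)]
    nlinarith
  have h3 : (v : ℝ) / a ≤ s / 6.36 := by
    rw [div_le_div_iff₀ ha0 (by norm_num)]
    nlinarith
  have hmain : C / b ≤ Real.exp (-20) / 15.9 := by
    rw [hCb]
    calc (Real.sqrt (2 * π * (v : ℝ)))⁻¹ * Real.exp (-a ^ 2 / (2 * (v : ℝ))) * ((v : ℝ) / a)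
        ≤ (2.5 * s)⁻¹ * Real.exp (-20) * (s / 6.36) := by
          apply mul_le_mul (mul_le_mul h1 h2 (Real.exp_pos _).le (by positivity)) h3
            (by positivity) (by positivity)
    _ = Real.exp (-20) / 15.9 := by field_simp; ring
  have e20 : (3.2e8 : ℝ) < Real.exp 20 := by
    calc (3.2e8 : ℝ) < 2.7 ^ 20 := by norm_num
    _ ≤ Real.exp 1 ^ 20 := by
        apply pow_le_pow_left₀ (by norm_num)
        exact (lt_trans (show (2.7 : ℝ) < 2.7182818283 by norm_num) Real.exp_one_gt_d9).le
    _ = Real.exp 20 := by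
        rw [← Real.exp_nat_mul]
        norm_num
  have hnum : Real.exp (-20) / 15.9 < 2 / 10 ^ 10 := by
    have hxe : Real.exp (-20) < (3.2e8 : ℝ)⁻¹ := by
      rw [Real.exp_neg]
      exact inv_strictAnti₀ (by norm_num) e20
    calc Real.exp (-20) / 15.9 < (3.2e8 : ℝ)⁻¹ / 15.9 :=
          (div_lt_div_iff_of_pos_right (by norm_num)).mpr hxe
    _ ≤ 2 / 10 ^ 10 := by norm_num
  calc ∫⁻ x in Set.Iio c, gaussianPDF m v x
      ≤ ∫⁻ x in Set.Iio c, ENNReal.ofReal (C * Real.exp (b * (x - c))) :=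
        lintegral_mono fun x => hpt x
  _ = ENNReal.ofReal (C / b) := heq
  _ < ENNReal.ofReal (2 / 10 ^ 10) := by
      rw [ENNReal.ofReal_lt_ofReal_iff (by norm_num)]
      exact lt_of_le_of_lt hmain hnum
end

section
/- Let h ∈ (0,1], α ∈ (0,1], τ > 0 and p ∈ [0,1) be real numbers, and let X be a real random variable whose distribution is the Gaussian measure on ℝ with mean μ_a = (1−h)·α·τ and variance σ_a² = (1−h)·α·τ·(1−p). If the real number θ satisfies θ > (1−h)·α + 6.36·√((1−h)·α/τ), then Pr(X ≥ θ·τ) < 2·10⁻¹⁰. (Theorem 2 of the paper: no fraudulent cross-chain message gathers θτ adversarial votes, stated under the paper's Normal approximation of the Binomial vote count of adversarial envoys.) -/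
open MeasureTheory ProbabilityTheory Real Filter Set


-- FTC computation of the tail integral of (x-m)·exp(-b(x-m)²)
lemma eden_ftc (b m c : ℝ) (hb : 0 < b) :
    ∫ x in Set.Ioi c, (x - m) * Real.exp (-b * (x - m) ^ 2)
      = Real.exp (-b * (c - m) ^ 2) / (2 * b) := by
  have hderiv : ∀ x ∈ Set.Ici c, HasDerivAt
      (fun x : ℝ => -(2 * b)⁻¹ * Real.exp (-b * (x - m) ^ 2))
      ((x - m) * Real.exp (-b * (x - m) ^ 2)) x := by
    intro x _
    have h1 : HasDerivAt (fun x : ℝ => -b * (x - m) ^ 2)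
        (-b * (2 * (x - m) ^ 1 * 1)) x :=
      (((hasDerivAt_id x).sub_const m).pow 2).const_mul (-b)
    have h2 := (h1.exp).const_mul (-(2 * b)⁻¹)
    refine h2.congr_deriv ?_
    have hb' : b ≠ 0 := hb.ne'
    have hk : (2 * b)⁻¹ * b * 2 = 1 := by field_simp
    linear_combination ((x - m) * Real.exp (-b * (x - m) ^ 2)) * hk
  have hint : IntegrableOn (fun x : ℝ => (x - m) * Real.exp (-b * (x - m) ^ 2))
      (Set.Ioi c) := by
    have := (integrable_mul_exp_neg_mul_sq hb).comp_sub_right m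
    exact this.integrableOn
  have htends : Tendsto (fun x : ℝ => -(2 * b)⁻¹ * Real.exp (-b * (x - m) ^ 2))
      atTop (nhds 0) := by
    have h1 : Tendsto (fun x : ℝ => (x - m) ^ 2) atTop atTop := by
      have : Tendsto (fun x : ℝ => x - m) atTop atTop :=
        tendsto_atTop_add_const_right atTop (-m) tendsto_id
      exact (tendsto_pow_atTop two_ne_zero).comp this
    have h2 : Tendsto (fun x : ℝ => -b * (x - m) ^ 2) atTop atBot :=
      h1.const_mul_atTop_of_neg (by linarith)
    have h3 := Real.tendsto_exp_atBot.comp h2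
    have := h3.const_mul (-(2 * b)⁻¹)
    simpa using this
  have := integral_Ioi_of_hasDerivAt_of_tendsto'
      (f' := fun x : ℝ => (x - m) * Real.exp (-b * (x - m) ^ 2)) hderiv hint htends
  rw [this]
  field_simp
  ring

lemma eden_tail (m c vr : ℝ) (hv : 0 < vr) (hc : m < c) :
    ∫ x in Set.Ioi c, Real.exp (-(x - m) ^ 2 / (2 * vr))
      ≤ vr / (c - m) * Real.exp (-(c - m) ^ 2 / (2 * vr)) := by
  set b : ℝ := (2 * vr)⁻¹ with hbdef
  have hb : 0 < b := by positivity
  have hexp : ∀ y : ℝ, Real.exp (-y ^ 2 / (2 * vr)) = Real.exp (-b * y ^ 2) := by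
    intro y; congr 1; rw [hbdef]; field_simp
  have hd : 0 < c - m := by linarith
  have hint1 : IntegrableOn (fun x : ℝ => Real.exp (-b * (x - m) ^ 2)) (Set.Ioi c) :=
    ((integrable_exp_neg_mul_sq hb).comp_sub_right m).integrableOn
  have hint2 : IntegrableOn
      (fun x : ℝ => (c - m)⁻¹ * ((x - m) * Real.exp (-b * (x - m) ^ 2))) (Set.Ioi c) :=
    (((integrable_mul_exp_neg_mul_sq hb).comp_sub_right m).const_mul _).integrableOn
  calc ∫ x in Set.Ioi c, Real.exp (-(x - m) ^ 2 / (2 * vr))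
      = ∫ x in Set.Ioi c, Real.exp (-b * (x - m) ^ 2) := by
        refine setIntegral_congr_fun measurableSet_Ioi fun x _ => ?_
        exact hexp _
    _ ≤ ∫ x in Set.Ioi c, (c - m)⁻¹ * ((x - m) * Real.exp (-b * (x - m) ^ 2)) := by
        refine setIntegral_mono_on hint1 hint2 measurableSet_Ioi fun x hx => ?_
        have hx' : c - m ≤ x - m := by simp only [Set.mem_Ioi] at hx; linarith
        have h1 : (1 : ℝ) ≤ (c - m)⁻¹ * (x - m) := by
          rw [← div_eq_inv_mul, le_div_iff₀ hd, one_mul]; exact hx'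
        nlinarith [Real.exp_pos (-b * (x - m) ^ 2), Real.exp_pos (-b * (x - m) ^ 2)]
    _ = (c - m)⁻¹ * ∫ x in Set.Ioi c, (x - m) * Real.exp (-b * (x - m) ^ 2) :=
        integral_const_mul _ _
    _ = (c - m)⁻¹ * (Real.exp (-b * (c - m) ^ 2) / (2 * b)) := by rw [eden_ftc b m c hb]
    _ = vr / (c - m) * Real.exp (-(c - m) ^ 2 / (2 * vr)) := by
        rw [hexp (c - m), hbdef]
        field_simp

lemma eden_exp20 : Real.exp (-20 : ℝ) < (3.2e8 : ℝ)⁻¹ := by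
  have h1 : Real.exp (20 : ℝ) = Real.exp 1 ^ (20 : ℕ) := by
    rw [← Real.exp_nat_mul]; norm_num
  have h2 : (2.7182818283 : ℝ) ^ (20 : ℕ) ≤ Real.exp 1 ^ (20 : ℕ) :=
    pow_le_pow_left₀ (by norm_num) Real.exp_one_gt_d9.le 20
  have h3 : (3.2e8 : ℝ) < 2.7182818283 ^ (20 : ℕ) := by norm_num
  have h4 : (3.2e8 : ℝ) < Real.exp 20 := by linarith
  rw [Real.exp_neg]
  exact inv_strictAnti₀ (by norm_num) h4

lemma eden_sqrt_two_pi : (2.5 : ℝ) ≤ Real.sqrt (2 * Real.pi) := by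
  rw [show (2.5 : ℝ) = Real.sqrt (2.5 ^ 2) by rw [Real.sqrt_sq]; norm_num]
  apply Real.sqrt_le_sqrt
  nlinarith [Real.pi_gt_d6]


-- combined tail estimate for any Gaussian whose gap exceeds 6.36 standard deviations
lemma eden_gauss_bound (μ0 c vr s : ℝ) (hvr : 0 < vr) (hs0 : 0 < s)
    (hvs : vr ≤ s ^ 2) (hgap : 6.36 * s < c - μ0) :
    ∫ x in Set.Ici c, (Real.sqrt (2 * Real.pi * vr))⁻¹ *
      Real.exp (-(x - μ0) ^ 2 / (2 * vr)) < 2 / 10 ^ 10 := by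
  have hd : 0 < c - μ0 := lt_trans (by positivity) hgap
  have hμc : μ0 < c := by linarith
  set t : ℝ := Real.sqrt vr with ht_def
  have ht0 : 0 < t := Real.sqrt_pos.mpr hvr
  have ht2 : t ^ 2 = vr := Real.sq_sqrt hvr.le
  have hts : t ≤ s := by
    rw [ht_def, show s = Real.sqrt (s ^ 2) from (Real.sqrt_sq hs0.le).symm]
    exact Real.sqrt_le_sqrt hvs
  have hsplit : Real.sqrt (2 * Real.pi * vr) = Real.sqrt (2 * Real.pi) * t :=
    Real.sqrt_mul (by positivity) vr
  have hsp : (2.5 : ℝ) ≤ Real.sqrt (2 * Real.pi) := eden_sqrt_two_pi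
  have hsp0 : 0 < Real.sqrt (2 * Real.pi) := by linarith
  -- exponential part
  have hE : Real.exp (-(c - μ0) ^ 2 / (2 * vr)) ≤ Real.exp (-20) := by
    apply Real.exp_le_exp.mpr
    rw [neg_div, neg_le_neg_iff]
    rw [le_div_iff₀ (by positivity)]
    nlinarith
  have hE0 : 0 < Real.exp (-(c - μ0) ^ 2 / (2 * vr)) := Real.exp_pos _
  -- the integral bound
  calc ∫ x in Set.Ici c, (Real.sqrt (2 * Real.pi * vr))⁻¹ *
        Real.exp (-(x - μ0) ^ 2 / (2 * vr))
      = (Real.sqrt (2 * Real.pi * vr))⁻¹ *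
        ∫ x in Set.Ioi c, Real.exp (-(x - μ0) ^ 2 / (2 * vr)) := by
        rw [MeasureTheory.integral_Ici_eq_integral_Ioi, integral_const_mul]
    _ ≤ (Real.sqrt (2 * Real.pi * vr))⁻¹ *
        (vr / (c - μ0) * Real.exp (-(c - μ0) ^ 2 / (2 * vr))) := by
        apply mul_le_mul_of_nonneg_left (eden_tail μ0 c vr hvr hμc)
        positivity
    _ = t / (Real.sqrt (2 * Real.pi) * (c - μ0)) *
        Real.exp (-(c - μ0) ^ 2 / (2 * vr)) := by
        rw [hsplit, ← ht2]
        field_simp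
    _ ≤ 1 / 6.36 * (1 / 2.5) * Real.exp (-20) := by
        apply mul_le_mul _ hE hE0.le (by norm_num)
        rw [div_le_iff₀ (by positivity)]
        nlinarith
    _ < 1 / 6.36 * (1 / 2.5) * (3.2e8)⁻¹ := by
        have := eden_exp20
        nlinarith
    _ < 2 / 10 ^ 10 := by norm_num

/-- Theorem 2 of the paper (under the Normal approximation): if
`θ > (1−h)·α + 6.36·√((1−h)·α/τ)`, then a Gaussian adversarial vote count
`X ∼ N((1−h)ατ, (1−h)ατ(1−p))` satisfies `Pr(X ≥ θτ) < 2·10⁻¹⁰`. -/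
theorem eden_theorem_adversarial
    {Ω : Type*} [MeasurableSpace Ω] (P : Measure Ω) [IsProbabilityMeasure P]
    (h α τ p θ : ℝ)
    (hh : h ∈ Set.Ioc (0 : ℝ) 1) (hα : α ∈ Set.Ioc (0 : ℝ) 1)
    (hτ : 0 < τ) (hp : p ∈ Set.Ico (0 : ℝ) 1)
    (X : Ω → ℝ)
    (hX : P.map X = gaussianReal ((1 - h) * α * τ) ((1 - h) * α * τ * (1 - p)).toNNReal)
    (hθ : θ > (1 - h) * α + 6.36 * Real.sqrt ((1 - h) * α / τ)) :
    P {ω | X ω ≥ θ * τ} < ENNReal.ofReal (2 / 10 ^ 10) := by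
  obtain ⟨hh0, hh1⟩ := hh
  obtain ⟨hα0, hα1⟩ := hα
  obtain ⟨hp0, hp1⟩ := hp
  have hXae : AEMeasurable X P := by
    by_contra hc
    rw [Measure.map_of_not_aemeasurable hc] at hX
    have h0 := congrArg (fun μ : Measure ℝ => μ Set.univ) hX
    simp [measure_univ] at h0
  have hset : P {ω | X ω ≥ θ * τ} = (P.map X) (Set.Ici (θ * τ)) := by
    rw [Measure.map_apply_of_aemeasurable hXae measurableSet_Ici]
    rfl
  by_cases hone : h = 1
  · -- degenerate case: zero mean, zero variance
    subst hone
    norm_num at hX hθ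
    have hθ0 : 0 < θ * τ := by positivity
    rw [hset, hX, Measure.dirac_apply' _ measurableSet_Ici]
    simp only [Set.indicator_apply, Set.mem_Ici]
    rw [if_neg (by linarith)]
    simp [ENNReal.ofReal_pos]
  · -- main case
    have hh1' : h < 1 := lt_of_le_of_ne hh1 hone
    have hA : 0 < (1 - h) * α := by apply mul_pos <;> linarith
    have hvr : 0 < (1 - h) * α * τ * (1 - p) := by
      apply mul_pos (mul_pos hA hτ); linarith
    have hvne : ((1 - h) * α * τ * (1 - p)).toNNReal ≠ 0 := by
      rw [ne_eq, Real.toNNReal_eq_zero, not_le]; exact hvr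
    have hcoe : ((((1 - h) * α * τ * (1 - p)).toNNReal) : ℝ)
        = (1 - h) * α * τ * (1 - p) := Real.coe_toNNReal _ hvr.le
    have hs0 : 0 < Real.sqrt ((1 - h) * α * τ) :=
      Real.sqrt_pos.mpr (by apply mul_pos hA hτ)
    have hs2 : Real.sqrt ((1 - h) * α * τ) ^ 2 = (1 - h) * α * τ :=
      Real.sq_sqrt (by positivity)
    have hsqrt_eq : Real.sqrt ((1 - h) * α / τ) * τ = Real.sqrt ((1 - h) * α * τ) := by
      rw [show (1 - h) * α * τ = (1 - h) * α / τ * τ ^ 2 by field_simp,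
        Real.sqrt_mul (by positivity), Real.sqrt_sq hτ.le]
    have hgap : 6.36 * Real.sqrt ((1 - h) * α * τ) < θ * τ - (1 - h) * α * τ := by
      have h1 : θ - (1 - h) * α > 6.36 * Real.sqrt ((1 - h) * α / τ) := by linarith
      calc 6.36 * Real.sqrt ((1 - h) * α * τ)
          = 6.36 * Real.sqrt ((1 - h) * α / τ) * τ := by rw [← hsqrt_eq]; ring
        _ < (θ - (1 - h) * α) * τ := by nlinarith
        _ = θ * τ - (1 - h) * α * τ := by ring
    have hvs : (1 - h) * α * τ * (1 - p) ≤ Real.sqrt ((1 - h) * α * τ) ^ 2 := by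
      rw [hs2]; nlinarith [mul_pos hA hτ]
    have hkey := eden_gauss_bound ((1 - h) * α * τ) (θ * τ)
      ((1 - h) * α * τ * (1 - p)) (Real.sqrt ((1 - h) * α * τ)) hvr hs0 hvs hgap
    rw [hset, hX, gaussianReal_apply_eq_integral _ hvne]
    rw [ENNReal.ofReal_lt_ofReal_iff (by norm_num)]
    calc ∫ x in Set.Ici (θ * τ),
          gaussianPDFReal ((1 - h) * α * τ) ((1 - h) * α * τ * (1 - p)).toNNReal x
        = ∫ x in Set.Ici (θ * τ),
          (Real.sqrt (2 * Real.pi * ((1 - h) * α * τ * (1 - p))))⁻¹ *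
            Real.exp (-(x - (1 - h) * α * τ) ^ 2 / (2 * ((1 - h) * α * τ * (1 - p)))) := by
          refine setIntegral_congr_fun measurableSet_Ici fun x _ => ?_
          rw [gaussianPDFReal, hcoe]
      _ < 2 / 10 ^ 10 := hkey
end
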